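/- Let p be a prime and G a finite abelian p-group. Then the rank of 𝒰(ℤ[G]) is nonzero (equivalently, 𝒰(ℤ[G]) is infinite) if and only if G has a cyclic quotient of order at least 5, equivalently if and only if the exponent of G is at least 5. -/

import Mathlib

open Finset MonoidAlgebra

section Bass
variable {G : Type*} [CommGroup G]

private lemma of_mul_N (g : G) (n : ℕ) (hg : g ^ n = 1) :
    of ℤ G g * (∑ i ∈ Finset.range n, of ℤ G (g ^ i)) = ∑ i ∈ Finset.range n, of ℤ G (g ^ i) := by
  have h1 : of ℤ G g * (∑ i ∈ Finset.range n, of ℤ G (g ^ i))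
      = ∑ i ∈ Finset.range n, of ℤ G (g ^ (i + 1)) := by
    rw [Finset.mul_sum]
    refine Finset.sum_congr rfl fun i _ => ?_
    rw [← map_mul, ← pow_succ']
  have h2 := Finset.sum_range_succ' (fun i => of ℤ G (g ^ i)) n
  have h3 := Finset.sum_range_succ (fun i => of ℤ G (g ^ i)) n
  rw [h1]
  have : (∑ i ∈ Finset.range n, of ℤ G (g ^ (i+1))) + of ℤ G (g ^ 0)
      = (∑ i ∈ Finset.range n, of ℤ G (g ^ i)) + of ℤ G (g ^ n) := by
    rw [← h2, ← h3]
  rw [hg, pow_zero] at this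
  exact add_right_cancel this

private lemma ofpow_mul_N (g : G) (n : ℕ) (hg : g ^ n = 1) (j : ℕ) :
    of ℤ G (g ^ j) * (∑ i ∈ Finset.range n, of ℤ G (g ^ i)) = ∑ i ∈ Finset.range n, of ℤ G (g ^ i) := by
  induction j with
  | zero => rw [pow_zero, map_one, one_mul]
  | succ j ih =>
      rw [pow_succ, map_mul, mul_assoc, of_mul_N g n hg, ih]

lemma bass_isUnit (g : G) (n k k' m : ℕ) (hn : 0 < n) (hg : g ^ n = 1)
    (hkk' : k * k' = n + 1) (hk : (n : ℤ) ∣ (k : ℤ) ^ m - 1) :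
    ∃ a : ℤ, IsUnit ((∑ i ∈ Finset.range k, of ℤ G (g ^ i)) ^ m
      + a • (∑ i ∈ Finset.range n, of ℤ G (g ^ i))) := by
  set N : MonoidAlgebra ℤ G := ∑ i ∈ Finset.range n, of ℤ G (g ^ i) with hN
  set A : MonoidAlgebra ℤ G := ∑ i ∈ Finset.range k, of ℤ G (g ^ i) with hA
  set B : MonoidAlgebra ℤ G := ∑ j ∈ Finset.range k', of ℤ G (g ^ (j * k)) with hB
  have hsum_mul_N : ∀ (s : ℕ) (f : ℕ → ℕ),
      (∑ i ∈ Finset.range s, of ℤ G (g ^ f i)) * N = (s : ℤ) • N := by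
    intro s f
    rw [Finset.sum_mul]
    have : ∀ i ∈ Finset.range s, of ℤ G (g ^ f i) * N = N := fun i _ => ofpow_mul_N g n hg (f i)
    rw [Finset.sum_congr rfl this, Finset.sum_const, Finset.card_range]
    simp
  have hAN : A * N = (k : ℤ) • N := hsum_mul_N k id
  have hBN : B * N = (k' : ℤ) • N := hsum_mul_N k' (· * k)
  have hNN : N * N = (n : ℤ) • N := hsum_mul_N n id
  have hApowN : ∀ t : ℕ, A ^ t * N = ((k : ℤ) ^ t) • N := by
    intro t
    induction t with
    | zero => simp
    | succ t ih => rw [pow_succ, mul_assoc, hAN, mul_smul_comm, ih, smul_smul, ← pow_succ']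
  have hBpowN : ∀ t : ℕ, B ^ t * N = ((k' : ℤ) ^ t) • N := by
    intro t
    induction t with
    | zero => simp
    | succ t ih => rw [pow_succ, mul_assoc, hBN, mul_smul_comm, ih, smul_smul, ← pow_succ']
  -- A * B = 1 + N
  have hAB : A * B = 1 + N := by
    have key : ∀ t : ℕ, A * (∑ j ∈ Finset.range t, of ℤ G (g ^ (j * k)))
        = ∑ e ∈ Finset.range (k * t), of ℤ G (g ^ e) := by
      intro t
      induction t with
      | zero => simp
      | succ t ih =>
          rw [Finset.sum_range_succ, mul_add, ih, Nat.mul_succ, Finset.sum_range_add]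
          congr 1
          rw [hA, Finset.sum_mul]
          refine Finset.sum_congr rfl fun i _ => ?_
          rw [← map_mul, ← pow_add]
          congr 2
          ring
    rw [hB, key k', hkk', Finset.sum_range_succ, hg, map_one, add_comm]
  -- (1 + N)^m = 1 + c • N  with n * c = (n+1)^m - 1
  have hpow1N : ∀ t : ℕ, ∃ c : ℤ, (1 + N) ^ t = 1 + c • N ∧ (n : ℤ) * c = ((n : ℤ) + 1) ^ t - 1 := by
    intro t
    induction t with
    | zero => exact ⟨0, by simp, by simp⟩
    | succ t ih =>
        obtain ⟨c, hc1, hc2⟩ := ih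
        refine ⟨1 + c + c * n, ?_, ?_⟩
        · rw [pow_succ, hc1, add_mul, one_mul, mul_add, mul_one, smul_mul_assoc, hNN, smul_smul]
          rw [add_smul, add_smul]
          ring_nf
        · have : (n:ℤ) * (1 + c + c * n) = n + (n * c) * (1 + n) := by ring
          rw [this, hc2]
          ring
  obtain ⟨c, hc1, hc2⟩ := hpow1N m
  -- divisibility for k'
  have hk' : (n : ℤ) ∣ (k' : ℤ) ^ m - 1 := by
    have h1 : (n : ℤ) ∣ ((n : ℤ) + 1) ^ m - 1 := by
      have := sub_dvd_pow_sub_pow ((n : ℤ) + 1) 1 m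
      simpa using this
    have h2 : ((k : ℤ) * k') ^ m = ((n : ℤ) + 1) ^ m := by
      rw [← Nat.cast_mul, hkk']
      push_cast
      ring_nf
    have h3 : (k' : ℤ) ^ m - 1 = (((n:ℤ)+1) ^ m - 1) - (k' : ℤ) ^ m * ((k:ℤ) ^ m - 1) := by
      rw [← h2]
      ring
    rw [h3]
    exact dvd_sub h1 (Dvd.dvd.mul_left hk _)
  obtain ⟨a0, ha0⟩ := hk
  obtain ⟨b0, hb0⟩ := hk'
  set a : ℤ := -a0 with haa
  set b : ℤ := -b0 with hbb
  have hna : (n : ℤ) * a = 1 - (k : ℤ) ^ m := by rw [haa, mul_neg, ← ha0]; ring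
  have hnb : (n : ℤ) * b = 1 - (k' : ℤ) ^ m := by rw [hbb, mul_neg, ← hb0]; ring
  refine ⟨a, IsUnit.of_mul_eq_one (B ^ m + b • N) ?_⟩
  have expand : (A ^ m + a • N) * (B ^ m + b • N)
      = (A * B) ^ m + (b * (k:ℤ)^m + a * (k':ℤ)^m + a * b * n) • N := by
    rw [mul_pow]
    have e1 : A ^ m * (b • N) = (b * (k:ℤ)^m) • N := by
      rw [mul_smul_comm, hApowN, smul_smul]
    have e2 : (a • N) * B ^ m = (a * (k':ℤ)^m) • N := by
      rw [smul_mul_assoc, mul_comm N, hBpowN, smul_smul]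
    have e3 : (a • N) * (b • N) = (a * b * n) • N := by
      rw [smul_mul_assoc, mul_smul_comm, hNN, smul_smul, smul_smul]
    rw [add_mul, mul_add, mul_add, e1, e2, e3, add_smul, add_smul]
    abel
  rw [expand, hAB, hc1]
  have hcoef : c + (b * (k:ℤ)^m + a * (k':ℤ)^m + a * b * n) = 0 := by
    have hn0 : (n : ℤ) ≠ 0 := by exact_mod_cast hn.ne'
    have key : (n:ℤ) * ((n:ℤ) * (c + (b * (k:ℤ)^m + a * (k':ℤ)^m + a * b * n))) = 0 := by
      have h2 : ((k : ℤ)) ^ m * ((k' : ℤ)) ^ m = ((n : ℤ) + 1) ^ m := by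
        rw [← mul_pow, ← Nat.cast_mul, hkk']; push_cast; ring_nf
      have expand2 : (n:ℤ) * ((n:ℤ) * (c + (b * (k:ℤ)^m + a * (k':ℤ)^m + a * b * n)))
          = (n:ℤ) * ((n:ℤ)*c) + ((n:ℤ)*b) * (k:ℤ)^m * n + ((n:ℤ)*a) * (k':ℤ)^m * n
            + ((n:ℤ)*a) * ((n:ℤ)*b) * n := by ring
      rw [expand2, hc2, hna, hnb]
      linear_combination (-(n:ℤ)) * h2
    have := mul_eq_zero.mp key
    rcases this with h | h
    · exact absurd h hn0
    · rcases mul_eq_zero.mp h with h' | h'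
      · exact absurd h' hn0
      · exact h'
  rw [add_assoc, ← add_smul, hcoef, zero_smul, add_zero]
end Bass

section Hom

/-- Monoid hom out of `Multiplicative (ZMod n)` sending `1` to an element `ζ` with `ζ ^ n = 1`. -/
def zmodHom {M : Type*} [Monoid M] (n : ℕ) [NeZero n] (ζ : M) (hζ : ζ ^ n = 1) :
    Multiplicative (ZMod n) →* M where
  toFun x := ζ ^ (Multiplicative.toAdd x).val
  map_one' := by simp
  map_mul' x y := by
    show ζ ^ (Multiplicative.toAdd (x * y)).val = _
    rw [toAdd_mul, ZMod.val_add, ← pow_eq_pow_mod _ hζ, pow_add]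

lemma zmodHom_apply_pow {M : Type*} [Monoid M] (n : ℕ) [NeZero n] (ζ : M) (hζ : ζ ^ n = 1)
    (i : ℕ) : zmodHom n ζ hζ (Multiplicative.ofAdd (1 : ZMod n) ^ i) = ζ ^ i := by
  show ζ ^ (Multiplicative.toAdd (Multiplicative.ofAdd (1 : ZMod n) ^ i)).val = ζ ^ i
  rw [toAdd_pow]
  simp only [toAdd_ofAdd, nsmul_eq_mul, mul_one]
  rw [ZMod.val_natCast, ← pow_eq_pow_mod _ hζ]

lemma zmodHom_injective {G : Type*} [Group G] (n : ℕ) [NeZero n] (g : G) (hg : g ^ n = 1)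
    (hord : orderOf g = n) : Function.Injective (zmodHom n g hg) := by
  intro x y hxy
  have h1 : g ^ (Multiplicative.toAdd x).val = g ^ (Multiplicative.toAdd y).val := hxy
  rw [pow_eq_pow_iff_modEq, hord] at h1
  have h2 : (Multiplicative.toAdd x).val = (Multiplicative.toAdd y).val := by
    have hx := ZMod.val_lt (Multiplicative.toAdd x)
    have hy := ZMod.val_lt (Multiplicative.toAdd y)
    unfold Nat.ModEq at h1
    rwa [Nat.mod_eq_of_lt hx, Nat.mod_eq_of_lt hy] at h1
  have := ZMod.val_injective n h2
  exact Multiplicative.toAdd.injective this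

lemma infinite_units_transfer {H G : Type*} [CommGroup H] [CommGroup G] (f : H →* G)
    (hf : Function.Injective f) (h : Infinite (MonoidAlgebra ℤ H)ˣ) :
    Infinite (MonoidAlgebra ℤ G)ˣ := by
  have hinj : Function.Injective (MonoidAlgebra.mapDomainRingHom ℤ f) :=
    MonoidAlgebra.mapDomain_injective hf
  refine @Infinite.of_injective _ _ h
    (Units.map (MonoidAlgebra.mapDomainRingHom ℤ f).toMonoidHom) ?_
  intro u v huv
  apply Units.ext
  apply hinj
  have := congrArg Units.val huv
  simpa using this

end Hom

section Cyclic

lemma infinite_units_of_cyclic (n k k' m : ℕ) (hn : 5 ≤ n) (hm : m ≠ 0)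
    (hkk' : k * k' = n + 1) (hkd : (n : ℤ) ∣ (k : ℤ) ^ m - 1)
    (habs : 1 < ‖(∑ i ∈ Finset.range k,
      Complex.exp (2 * Real.pi * Complex.I / n) ^ i)‖) :
    Infinite (MonoidAlgebra ℤ (Multiplicative (ZMod n)))ˣ := by
  haveI : NeZero n := ⟨by omega⟩
  set H := Multiplicative (ZMod n) with hH
  set g : H := Multiplicative.ofAdd (1 : ZMod n) with hgdef
  have hg : g ^ n = 1 := by
    show Multiplicative.ofAdd (1 : ZMod n) ^ n = 1
    rw [← ofAdd_nsmul]
    simp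
  obtain ⟨a, hu⟩ := bass_isUnit g n k k' m (by omega) hg hkk' hkd
  set ζ : ℂ := Complex.exp (2 * Real.pi * Complex.I / n) with hζdef
  have hprim : IsPrimitiveRoot ζ n := Complex.isPrimitiveRoot_exp n (by omega)
  have hζn : ζ ^ n = 1 := hprim.pow_eq_one
  set χ : H →* ℂ := zmodHom n ζ hζn with hχdef
  set Φ := MonoidAlgebra.lift ℤ ℂ H χ with hΦdef
  have hofval : ∀ i : ℕ, Φ (of ℤ H (g ^ i)) = ζ ^ i := by
    intro i
    rw [MonoidAlgebra.lift_of]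
    exact zmodHom_apply_pow n ζ hζn i
  have hΦN : Φ (∑ i ∈ Finset.range n, of ℤ H (g ^ i)) = 0 := by
    rw [map_sum]
    simp_rw [hofval]
    exact hprim.geom_sum_eq_zero (by omega)
  have hΦu : Φ ((hu.unit : MonoidAlgebra ℤ H)) = (∑ i ∈ Finset.range k, ζ ^ i) ^ m := by
    rw [hu.unit_spec, map_add, map_pow, map_sum, map_zsmul, hΦN, smul_zero, add_zero]
    simp_rw [hofval]
  set r : ℝ := ‖(∑ i ∈ Finset.range k, ζ ^ i)‖ with hrdef
  have habs' : ∀ t : ℕ, ‖(Φ ((hu.unit ^ t : (MonoidAlgebra ℤ H)ˣ) : MonoidAlgebra ℤ H))‖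
      = r ^ (m * t) := by
    intro t
    rw [Units.val_pow_eq_pow_val, map_pow, norm_pow, hΦu, norm_pow, pow_mul]
  refine Infinite.of_injective (fun t : ℕ => hu.unit ^ t) ?_
  intro s t hst
  have hst' : hu.unit ^ s = hu.unit ^ t := hst
  have h2 : r ^ (m * s) = r ^ (m * t) := by
    rw [← habs' s, ← habs' t, hst']
  have h3 : m * s = m * t := (pow_right_strictMono₀ habs).injective h2
  exact Nat.eq_of_mul_eq_mul_left (Nat.pos_of_ne_zero hm) h3

end Cyclic

section Instantiate

lemma infinite_units_of_odd (n : ℕ) (hn : 5 ≤ n) (hodd : Odd n) :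
    Infinite (MonoidAlgebra ℤ (Multiplicative (ZMod n)))ˣ := by
  obtain ⟨k', hk'⟩ : ∃ k', 2 * k' = n + 1 := by
    obtain ⟨t, ht⟩ := hodd
    exact ⟨t + 1, by omega⟩
  have hm0 : n.totient ≠ 0 := (Nat.totient_pos.mpr (by omega)).ne'
  have hdvd : (n : ℤ) ∣ (2 : ℤ) ^ n.totient - 1 := by
    have h := Nat.ModEq.pow_totient (Nat.coprime_two_left.mpr hodd)
    have h2 := h.dvd
    push_cast at h2 ⊢
    have h3 := dvd_neg.mpr h2
    rwa [neg_sub] at h3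
  refine infinite_units_of_cyclic n 2 k' n.totient hn hm0 hk' (by exact_mod_cast hdvd) ?_
  have hsum : (∑ i ∈ Finset.range 2, Complex.exp (2 * Real.pi * Complex.I / n) ^ i)
      = 1 + Complex.exp (2 * Real.pi * Complex.I / n) := by
    rw [Finset.sum_range_succ, Finset.sum_range_one, pow_zero, pow_one]
  rw [hsum]
  have e1 : Complex.exp (2 * Real.pi * Complex.I / n)
      = Complex.exp ((2 * Real.pi / n : ℝ) * Complex.I) := by
    congr 1
    push_cast
    ring
  have hre : (1 + Complex.exp (2 * Real.pi * Complex.I / n)).re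
      = 1 + Real.cos (2 * Real.pi / n) := by
    rw [e1, Complex.add_re, Complex.one_re, Complex.exp_ofReal_mul_I_re]
  have hcos : 0 < Real.cos (2 * Real.pi / n) := by
    have hpi := Real.pi_pos
    have hn5 : (5 : ℝ) ≤ n := by exact_mod_cast hn
    refine Real.cos_pos_of_mem_Ioo ⟨?_, ?_⟩
    · have : 0 < 2 * Real.pi / n := by positivity
      linarith
    · have h1 : 2 * Real.pi / n ≤ 2 * Real.pi / 5 :=
        div_le_div_of_nonneg_left (by positivity) (by norm_num) hn5
      nlinarith
  calc (1 : ℝ) < (1 + Complex.exp (2 * Real.pi * Complex.I / n)).re := by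
        rw [hre]; linarith
    _ ≤ ‖(1 + Complex.exp (2 * Real.pi * Complex.I / n))‖ := Complex.re_le_norm _

lemma infinite_units_eight :
    Infinite (MonoidAlgebra ℤ (Multiplicative (ZMod 8)))ˣ := by
  refine infinite_units_of_cyclic 8 3 3 2 (by norm_num) (by norm_num) (by norm_num)
    (by norm_num) ?_
  set ζ : ℂ := Complex.exp (2 * Real.pi * Complex.I / (8:ℕ)) with hζ
  have hsum : (∑ i ∈ Finset.range 3, ζ ^ i) = 1 + ζ + ζ ^ 2 := by
    rw [Finset.sum_range_succ, Finset.sum_range_succ, Finset.sum_range_one, pow_zero, pow_one]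
  rw [hsum]
  have e1 : ζ = Complex.exp ((Real.pi / 4 : ℝ) * Complex.I) := by
    rw [hζ]
    congr 1
    push_cast
    ring
  have e2 : ζ ^ 2 = Complex.exp ((Real.pi / 2 : ℝ) * Complex.I) := by
    rw [hζ, ← Complex.exp_nat_mul]
    congr 1
    push_cast
    ring
  have hre : (1 + ζ + ζ ^ 2).re = 1 + Real.cos (Real.pi / 4) + Real.cos (Real.pi / 2) := by
    rw [Complex.add_re, Complex.add_re, Complex.one_re, e2, e1,
      Complex.exp_ofReal_mul_I_re, Complex.exp_ofReal_mul_I_re]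
  have hs2 : 0 < Real.sqrt 2 := Real.sqrt_pos.mpr (by norm_num)
  calc (1 : ℝ) < (1 + ζ + ζ ^ 2).re := by
        rw [hre, Real.cos_pi_div_four, Real.cos_pi_div_two]
        linarith
    _ ≤ ‖(1 + ζ + ζ ^ 2)‖ := Complex.re_le_norm _

end Instantiate

lemma infinite_units_of_exponent {G : Type*} [CommGroup G] [Fintype G] {p : ℕ} (hp : p.Prime)
    (hpG : IsPGroup p G) (hexp : 5 ≤ Monoid.exponent G) :
    Infinite (MonoidAlgebra ℤ G)ˣ := by
  obtain ⟨g, hg⟩ := Monoid.exists_orderOf_eq_exponent (Monoid.ExponentExists.of_finite (G := G))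
  obtain ⟨A, hA⟩ := hpG g
  have hdvd : orderOf g ∣ p ^ A := orderOf_dvd_of_pow_eq_one hA
  obtain ⟨j, hj, hoj⟩ := (Nat.dvd_prime_pow hp).mp hdvd
  have hgexp : 5 ≤ orderOf g := by rw [hg]; exact hexp
  by_cases hp2 : p = 2
  · have hj3 : 3 ≤ j := by
      by_contra hlt
      push_neg at hlt
      have : orderOf g ≤ 4 := by
        rw [hoj, hp2]
        interval_cases j <;> norm_num
      omega
    have h8 : 8 ∣ orderOf g := by
      rw [hoj, hp2]
      have : (8 : ℕ) = 2 ^ 3 := by norm_num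
      rw [this]
      exact pow_dvd_pow 2 hj3
    set g8 := g ^ (orderOf g / 8) with hg8def
    have horder : orderOf g8 = 8 := orderOf_pow_orderOf_div (by omega) h8
    have hg81 : g8 ^ 8 = 1 := by rw [← horder]; exact pow_orderOf_eq_one g8
    haveI : NeZero (8 : ℕ) := ⟨by norm_num⟩
    exact infinite_units_transfer (zmodHom 8 g8 hg81)
      (zmodHom_injective 8 g8 hg81 horder) infinite_units_eight
  · have hodd : Odd (orderOf g) := by
      rw [hoj]
      exact (hp.odd_of_ne_two hp2).pow
    haveI : NeZero (orderOf g) := ⟨by omega⟩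
    have hg1 : g ^ orderOf g = 1 := pow_orderOf_eq_one g
    exact infinite_units_transfer (zmodHom (orderOf g) g hg1)
      (zmodHom_injective (orderOf g) g hg1 rfl)
      (infinite_units_of_odd (orderOf g) hgexp hodd)

section Ev
variable {G : Type*} [CommGroup G] [Fintype G]

/-- Evaluation of the integral group ring at a character. -/
noncomputable def ev (χ : G →* ℂˣ) : MonoidAlgebra ℤ G →ₐ[ℤ] ℂ :=
  MonoidAlgebra.lift ℤ ℂ G ((Units.coeHom ℂ).comp χ)

lemma ev_apply (χ : G →* ℂˣ) (x : MonoidAlgebra ℤ G) :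
    ev χ x = ∑ g : G, (x.coeff g : ℂ) * ((χ g : ℂ)) := by
  rw [ev, MonoidAlgebra.lift_apply, Finsupp.sum_fintype]
  · refine Finset.sum_congr rfl fun g _ => ?_
    rw [zsmul_eq_mul]
    rfl
  · intro a
    exact zero_smul ℤ _

/-- The involution of the group ring induced by inversion. -/
noncomputable def invo : MonoidAlgebra ℤ G →+* MonoidAlgebra ℤ G :=
  MonoidAlgebra.mapDomainRingHom ℤ (invMonoidHom : G →* G)

lemma ev_invo (e : ℕ) (he : e ≠ 0) (hG : ∀ g : G, g ^ e = 1) (χ : G →* ℂˣ)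
    (x : MonoidAlgebra ℤ G) :
    ev χ (invo x) = (starRingEnd ℂ) (ev χ x) := by
  have hnorm : ∀ g : G, ‖((χ g : ℂ))‖ = 1 := by
    intro g
    refine Complex.norm_eq_one_of_pow_eq_one ?_ he
    rw [← Units.val_pow_eq_pow_val, ← map_pow, hG g, map_one, Units.val_one]
  have hhom : ((ev χ).toRingHom.comp invo)
      = RingHom.comp (starRingEnd ℂ) (ev χ).toRingHom := by
    apply MonoidAlgebra.ringHom_ext
    · intro b
      simp only [RingHom.coe_comp, Function.comp_apply, AlgHom.toRingHom_eq_coe,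
        RingHom.coe_coe]
      have h1 : invo (single (1:G) b) = single (1:G) b := by
        show MonoidAlgebra.mapDomain (⇑(invMonoidHom : G →* G)) (single (1:G) b) = single (1:G) b
        rw [MonoidAlgebra.mapDomain_single]
        simp
      rw [h1]
      have h2 : (ev χ) (single (1:G) b) = (b : ℂ) := by
        rw [ev, MonoidAlgebra.lift_single]
        simp
      rw [h2]
      exact (map_intCast (starRingEnd ℂ) b).symm
    · intro a
      simp only [RingHom.coe_comp, Function.comp_apply, AlgHom.toRingHom_eq_coe,
        RingHom.coe_coe]
      have h1 : invo (single a (1:ℤ)) = single a⁻¹ (1:ℤ) := by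
        show MonoidAlgebra.mapDomain (⇑(invMonoidHom : G →* G)) (single a (1:ℤ)) = single a⁻¹ (1:ℤ)
        rw [MonoidAlgebra.mapDomain_single]
        simp
      rw [h1]
      have h2 : ∀ c : G, (ev χ) (single c (1:ℤ)) = ((χ c : ℂ)) := by
        intro c
        rw [ev, MonoidAlgebra.lift_single]
        simp
      rw [h2, h2, map_inv, Units.val_inv_eq_inv_val, Complex.inv_eq_conj (hnorm a)]
  exact DFunLike.congr_fun hhom x

lemma ev_injective (hsep : ∀ a : G, a ≠ 1 → ∃ χ : G →* ℂˣ, χ a ≠ 1)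
    [Fintype (G →* ℂˣ)] {x y : MonoidAlgebra ℤ G}
    (h : ∀ χ : G →* ℂˣ, ev χ x = ev χ y) : x = y := by
  -- dual orthogonality
  have horth : ∀ a : G, a ≠ 1 → ∑ χ : G →* ℂˣ, ((χ a : ℂ)) = 0 := by
    intro a ha
    obtain ⟨ψ, hψ⟩ := hsep a ha
    have hψ' : ((ψ a : ℂ)) ≠ 1 := by
      intro hc
      exact hψ (Units.ext (by simpa using hc))
    have hbij : ∑ χ : G →* ℂˣ, (((ψ * χ) a : ℂ)) = ∑ χ : G →* ℂˣ, ((χ a : ℂ)) :=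
      Fintype.sum_bijective _ (Group.mulLeft_bijective ψ) _ _ (fun χ => rfl)
    have hfac : ∑ χ : G →* ℂˣ, (((ψ * χ) a : ℂ)) = (ψ a : ℂ) * ∑ χ : G →* ℂˣ, ((χ a : ℂ)) := by
      rw [Finset.mul_sum]
      exact Finset.sum_congr rfl fun χ _ => by rw [MonoidHom.mul_apply, Units.val_mul]
    by_contra hne
    exact hψ' (mul_right_cancel₀ hne ((hfac.symm.trans hbij).trans (one_mul _).symm))
  haveI : Nonempty (G →* ℂˣ) := ⟨1⟩
  have key : ∀ z : MonoidAlgebra ℤ G, ∀ h₀ : G,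
      ∑ χ : G →* ℂˣ, ((χ h₀⁻¹ : ℂ)) * ev χ z
        = (z.coeff h₀ : ℂ) * (Fintype.card (G →* ℂˣ) : ℂ) := by
    intro z h₀
    have e1 : ∀ χ : G →* ℂˣ, ((χ h₀⁻¹ : ℂ)) * ev χ z
        = ∑ g : G, (z.coeff g : ℂ) * ((χ (h₀⁻¹ * g) : ℂ)) := by
      intro χ
      rw [ev_apply, Finset.mul_sum]
      refine Finset.sum_congr rfl fun g _ => ?_
      rw [map_mul, Units.val_mul]
      ring
    simp_rw [e1]
    rw [Finset.sum_comm]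
    have e2 : ∀ g : G, ∑ χ : G →* ℂˣ, (z.coeff g : ℂ) * ((χ (h₀⁻¹ * g) : ℂ))
        = (z.coeff g : ℂ) * ∑ χ : G →* ℂˣ, ((χ (h₀⁻¹ * g) : ℂ)) := fun g => by rw [Finset.mul_sum]
    simp_rw [e2]
    rw [Finset.sum_eq_single h₀]
    · rw [inv_mul_cancel]
      simp
    · intro g _ hgne
      rw [horth _ (fun hc => hgne ((inv_mul_eq_one.mp hc).symm)), mul_zero]
    · intro habs
      exact absurd (Finset.mem_univ h₀) habs
  apply MonoidAlgebra.ext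
  apply Finsupp.ext
  intro h₀
  have hx := key x h₀
  have hy := key y h₀
  simp_rw [h] at hx
  rw [hx] at hy
  have hcard : (Fintype.card (G →* ℂˣ) : ℂ) ≠ 0 := by
    exact_mod_cast Fintype.card_ne_zero
  have := mul_right_cancel₀ hcard hy
  exact_mod_cast this

end Ev

section Higman
variable {G : Type*} [CommGroup G] [Fintype G]

lemma finite_units_of_theta (θ : ℂ) (him : θ.im ≠ 0) (e : ℕ) (he : e ≠ 0)
    (hG : ∀ g : G, g ^ e = 1)
    (hroots : ∀ z : ℂ, z ^ e = 1 → ∃ a b : ℤ, z = a + b * θ) :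
    Finite (MonoidAlgebra ℤ G)ˣ := by
  classical
  haveI hNZ : NeZero ((Monoid.exponent G : ℂ)) :=
    ⟨by exact_mod_cast Monoid.exponent_ne_zero_of_finite⟩
  haveI : Finite (G →* ℂˣ) := by
    obtain ⟨eq⟩ := CommGroup.monoidHom_mulEquiv_of_hasEnoughRootsOfUnity G ℂ
    exact Finite.of_equiv G eq.symm.toEquiv
  haveI : Fintype (G →* ℂˣ) := Fintype.ofFinite _
  have hsep : ∀ a : G, a ≠ 1 → ∃ χ : G →* ℂˣ, χ a ≠ 1 := fun a ha =>
    CommGroup.exists_apply_ne_one_of_hasEnoughRootsOfUnity G ℂ ha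
  have hχpow : ∀ (χ : G →* ℂˣ) (g : G), ((χ g : ℂ)) ^ e = 1 := by
    intro χ g
    rw [← Units.val_pow_eq_pow_val, ← map_pow, hG g, map_one, Units.val_one]
  have hrep : ∀ (χ : G →* ℂˣ) (x : MonoidAlgebra ℤ G), ∃ a b : ℤ, ev χ x = a + b * θ := by
    intro χ x
    choose f1 f2 hf using fun g : G => hroots _ (hχpow χ g)
    refine ⟨∑ g : G, x.coeff g * f1 g, ∑ g : G, x.coeff g * f2 g, ?_⟩
    rw [ev_apply]
    push_cast
    rw [Finset.sum_mul, ← Finset.sum_add_distrib]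
    refine Finset.sum_congr rfl fun g _ => ?_
    rw [hf g]
    ring
  have hmain : ∀ (u : (MonoidAlgebra ℤ G)ˣ) (χ : G →* ℂˣ),
      ∃ a : ℤ, ev χ (u.val * invo u.val) = a ∧ 0 ≤ a := by
    intro u χ
    obtain ⟨a, b, hab⟩ := hrep χ (u.val * invo u.val)
    have hmul : ev χ (u.val * invo u.val) = ((Complex.normSq (ev χ u.val) : ℝ) : ℂ) := by
      rw [map_mul, ev_invo e he hG, Complex.mul_conj]
    have hb : (b : ℝ) * θ.im = 0 := by
      have h1 := congrArg Complex.im (hab.symm.trans hmul)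
      simpa using h1
    have hb0 : b = 0 := by
      rcases mul_eq_zero.mp hb with h | h
      · exact_mod_cast h
      · exact absurd h him
    have ha : ev χ (u.val * invo u.val) = (a : ℂ) := by
      rw [hab, hb0]
      simp
    refine ⟨a, ha, ?_⟩
    have h2 := congrArg Complex.re (ha.symm.trans hmul)
    have h3 : (a : ℝ) = Complex.normSq (ev χ u.val) := by simpa using h2
    have h4 := Complex.normSq_nonneg (ev χ u.val)
    rw [← h3] at h4
    exact_mod_cast h4
  have hone : ∀ u : (MonoidAlgebra ℤ G)ˣ, u.val * invo u.val = 1 := by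
    intro u
    refine ev_injective hsep fun χ => ?_
    obtain ⟨a, ha, hapos⟩ := hmain u χ
    obtain ⟨a', ha', ha'pos⟩ := hmain u⁻¹ χ
    have hprod : (u.val * invo u.val) * ((u⁻¹).val * invo (u⁻¹).val) = 1 := by
      rw [mul_mul_mul_comm, ← map_mul, Units.mul_inv, map_one, mul_one]
    have hev := congrArg (ev χ) hprod
    rw [map_mul, map_one, ha, ha'] at hev
    have haa' : a * a' = 1 := by exact_mod_cast hev
    have ha1 : a = 1 := by
      rcases Int.mul_eq_one_iff_eq_one_or_neg_one.mp haa' with ⟨h1, _⟩ | ⟨h1, _⟩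
      · exact h1
      · omega
    rw [ha, ha1, map_one]
    simp
  have hsq : ∀ (u : (MonoidAlgebra ℤ G)ˣ) (g₀ : G), (u.val.coeff g₀) ^ 2 ≤ 1 := by
    intro u g₀
    have h1 := congrArg (fun z : MonoidAlgebra ℤ G => z.coeff 1) (hone u)
    have hrhs : (1 : MonoidAlgebra ℤ G).coeff 1 = 1 := by
      rw [MonoidAlgebra.one_def]
      exact Finsupp.single_eq_same
    have hs : ∀ p : G × G, p ∈ Finset.univ.image (fun a : G => (a, a⁻¹)) ↔ p.1 * p.2 = 1 := by
      intro p
      constructor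
      · intro hp
        obtain ⟨a, -, rfl⟩ := Finset.mem_image.mp hp
        exact mul_inv_cancel a
      · intro hp
        refine Finset.mem_image.mpr ⟨p.1, Finset.mem_univ _, ?_⟩
        have h2 : p.2 = p.1⁻¹ := eq_inv_of_mul_eq_one_right hp
        rw [← h2]
    have hlhs : (u.val * invo u.val).coeff 1 = ∑ a : G, (u.val.coeff a) * (u.val.coeff a) := by
      rw [MonoidAlgebra.mul_apply_antidiagonal (u.val) (invo u.val) 1
        (Finset.univ.image (fun a : G => (a, a⁻¹))) (fun {p} => hs p),
        Finset.sum_image (by intro a _ b _ hab; exact congrArg Prod.fst hab)]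
      refine Finset.sum_congr rfl fun a _ => ?_
      congr 1
      show (Finsupp.mapDomain (⇑(invMonoidHom : G →* G)) u.val.coeff) a⁻¹ = u.val.coeff a
      rw [show a⁻¹ = (invMonoidHom : G →* G) a from rfl]
      exact Finsupp.mapDomain_apply (f := ⇑(invMonoidHom : G →* G))
        (fun x y hxy => inv_injective hxy) u.val.coeff a
    have hsum : ∑ a : G, (u.val.coeff a) ^ 2 = 1 := by
      have := h1
      simp only [hrhs] at this
      rw [hlhs] at this
      rw [← this]
      exact Finset.sum_congr rfl fun a _ => sq (u.val.coeff a)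
    calc (u.val.coeff g₀) ^ 2 ≤ ∑ a : G, (u.val.coeff a) ^ 2 :=
          Finset.single_le_sum (f := fun a : G => (u.val.coeff a) ^ 2)
            (fun a _ => sq_nonneg _) (Finset.mem_univ g₀)
      _ = 1 := hsum
  -- wrap up: embed units into a finite set
  have hSfin : (Set.univ.pi fun _ : G => (Set.Icc (-1 : ℤ) 1)).Finite :=
    Set.Finite.pi fun _ => Set.finite_Icc _ _
  haveI := hSfin.to_subtype
  refine Finite.of_injective
    (fun u : (MonoidAlgebra ℤ G)ˣ =>
      (⟨fun a => u.val.coeff a, ?_⟩ : (Set.univ.pi fun _ : G => (Set.Icc (-1 : ℤ) 1)))) ?_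
  · intro a _
    have := hsq u a
    constructor <;> nlinarith [this]
  · intro u v huv
    apply Units.ext
    apply MonoidAlgebra.ext
    apply Finsupp.ext
    intro a
    exact congrFun (congrArg Subtype.val huv) a

end Higman

section Roots

lemma roots4 (z : ℂ) (hz : z ^ 4 = 1) : ∃ a b : ℤ, z = a + b * Complex.I := by
  have h1 : (z ^ 2 - 1) * (z ^ 2 + 1) = 0 := by linear_combination hz
  rcases mul_eq_zero.mp h1 with h | h
  · have h2 : (z - 1) * (z + 1) = 0 := by linear_combination h
    rcases mul_eq_zero.mp h2 with h3 | h3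
    · exact ⟨1, 0, by push_cast; linear_combination h3⟩
    · exact ⟨-1, 0, by push_cast; linear_combination h3⟩
  · have h2 : (z - Complex.I) * (z + Complex.I) = 0 := by
      linear_combination h - Complex.I_sq
    rcases mul_eq_zero.mp h2 with h3 | h3
    · exact ⟨0, 1, by push_cast; linear_combination h3⟩
    · exact ⟨0, -1, by push_cast; linear_combination h3⟩

noncomputable def omg : ℂ := ⟨-1/2, Real.sqrt 3 / 2⟩

lemma omg_sq : omg ^ 2 + omg + 1 = 0 := by
  have h3 : Real.sqrt 3 * Real.sqrt 3 = 3 := Real.mul_self_sqrt (by norm_num)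
  rw [Complex.ext_iff]
  constructor <;>
    simp [omg, pow_two, Complex.mul_re, Complex.mul_im, Complex.add_re, Complex.add_im] <;>
    nlinarith [h3]

lemma omg_im : omg.im ≠ 0 := by
  have : 0 < Real.sqrt 3 := Real.sqrt_pos.mpr (by norm_num)
  show Real.sqrt 3 / 2 ≠ 0
  positivity

lemma roots3 (z : ℂ) (hz : z ^ 3 = 1) : ∃ a b : ℤ, z = a + b * omg := by
  have h1 : (z - 1) * (z ^ 2 + z + 1) = 0 := by linear_combination hz
  rcases mul_eq_zero.mp h1 with h | h
  · exact ⟨1, 0, by push_cast; linear_combination h⟩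
  · have h2 : (z - omg) * (z - (-1 - omg)) = 0 := by
      linear_combination h - omg_sq
    rcases mul_eq_zero.mp h2 with h3 | h3
    · exact ⟨0, 1, by push_cast; linear_combination h3⟩
    · exact ⟨-1, -1, by push_cast; linear_combination h3⟩

end Roots

section Small
variable {G : Type*} [CommGroup G] [Fintype G]

lemma finite_units_small {p : ℕ} (hp : p.Prime) (hpG : IsPGroup p G)
    (hexp : Monoid.exponent G ≤ 4) : Finite (MonoidAlgebra ℤ G)ˣ := by
  have hexppos : 0 < Monoid.exponent G :=
    Nat.pos_of_ne_zero Monoid.exponent_ne_zero_of_finite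
  by_cases hp2 : p = 2
  · refine finite_units_of_theta Complex.I (by simp) 4 (by norm_num) ?_ roots4
    intro g
    obtain ⟨A, hA⟩ := hpG g
    obtain ⟨j, hj, hoj⟩ := (Nat.dvd_prime_pow hp).mp (orderOf_dvd_of_pow_eq_one hA)
    have h1 : orderOf g ≤ 4 :=
      le_trans (Nat.le_of_dvd hexppos (Monoid.order_dvd_exponent g)) hexp
    have h2 : orderOf g ∣ 4 := by
      rw [hoj, hp2] at h1 ⊢
      have hj2 : j ≤ 2 := by
        by_contra hcon
        push_neg at hcon
        have : 2 ^ 3 ≤ 2 ^ j := Nat.pow_le_pow_right (by norm_num) (by omega)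
        omega
      have : (4 : ℕ) = 2 ^ 2 := by norm_num
      rw [this]
      exact pow_dvd_pow 2 hj2
    exact orderOf_dvd_iff_pow_eq_one.mp h2
  · refine finite_units_of_theta omg omg_im 3 (by norm_num) ?_ roots3
    intro g
    obtain ⟨A, hA⟩ := hpG g
    obtain ⟨j, hj, hoj⟩ := (Nat.dvd_prime_pow hp).mp (orderOf_dvd_of_pow_eq_one hA)
    have h1 : orderOf g ≤ 4 :=
      le_trans (Nat.le_of_dvd hexppos (Monoid.order_dvd_exponent g)) hexp
    have h2 : orderOf g ∣ 3 := by
      rw [hoj] at h1 ⊢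
      rcases j with _ | s
      · simp
      · have hple : p ≤ 4 := le_trans (Nat.le_self_pow (Nat.succ_ne_zero s) p) h1
        have hp2le := hp.two_le
        have hp3 : p = 3 := by
          interval_cases p
          · exact absurd rfl hp2
          · rfl
          · exact absurd hp (by norm_num)
        rcases s with _ | t
        · rw [hp3]
          simp
        · exfalso
          have : 3 ^ 2 ≤ 3 ^ (t + 1 + 1) := Nat.pow_le_pow_right (by norm_num) (by omega)
          rw [hp3] at h1
          omega
    exact orderOf_dvd_iff_pow_eq_one.mp (h2.trans (by norm_num))
end Small

section Quot
variable {G : Type*} [CommGroup G] [Fintype G]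

lemma exp_ge_of_quot (K : Subgroup G) (hc : IsCyclic (G ⧸ K)) (hcard : 5 ≤ Nat.card (G ⧸ K)) :
    5 ≤ Monoid.exponent G := by
  have h1 : Monoid.exponent (G ⧸ K) ∣ Monoid.exponent G :=
    MonoidHom.exponent_dvd (QuotientGroup.mk'_surjective K)
  have h2 : Monoid.exponent (G ⧸ K) = Nat.card (G ⧸ K) := IsCyclic.exponent_eq_card
  have h3 : 0 < Monoid.exponent G := Nat.pos_of_ne_zero Monoid.exponent_ne_zero_of_finite
  have h4 := Nat.le_of_dvd h3 h1
  omega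

lemma quot_of_exp_ge {p : ℕ} (hp : p.Prime) (hpG : IsPGroup p G)
    (hexp : 5 ≤ Monoid.exponent G) :
    ∃ K : Subgroup G, IsCyclic (G ⧸ K) ∧ 5 ≤ Nat.card (G ⧸ K) := by
  classical
  obtain ⟨ι, hfin, n, hn1, ⟨eqv⟩⟩ := CommGroup.equiv_prod_multiplicative_zmod_of_finite G
  -- there is a component of size at least 5
  have hxM : ∀ (M : ℕ) (y : Multiplicative (ZMod M)), y ^ M = 1 := by
    intro M y
    have : Multiplicative.toAdd (y ^ M) = 0 := by
      rw [toAdd_pow, nsmul_eq_mul, ZMod.natCast_self, zero_mul]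
    rwa [← toAdd_one, Multiplicative.toAdd.injective.eq_iff] at this
  obtain ⟨i₀, hi₀⟩ : ∃ i₀, 5 ≤ n i₀ := by
    by_contra hcon
    push_neg at hcon
    have h12 : ∀ x : G, x ^ 12 = 1 := by
      intro x
      have : eqv (x ^ 12) = 1 := by
        rw [map_pow]
        funext i
        show ((eqv x) i) ^ 12 = (1 : Multiplicative (ZMod (n i)))
        have hd : n i ∣ 12 := by
          have := hn1 i
          have := hcon i
          interval_cases (n i) <;> norm_num
        obtain ⟨c, hc⟩ := hd
        rw [hc, pow_mul, hxM (n i) ((eqv x) i), one_pow]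
      have := congrArg eqv.symm this
      rwa [MulEquiv.symm_apply_apply, map_one] at this
    have hdvd : Monoid.exponent G ∣ 12 := Monoid.exponent_dvd_of_forall_pow_eq_one h12
    -- exponent is a prime power ≥ 5 dividing 12: impossible
    obtain ⟨g, hg⟩ := Monoid.exists_orderOf_eq_exponent (Monoid.ExponentExists.of_finite (G := G))
    obtain ⟨A, hA⟩ := hpG g
    obtain ⟨j, hj, hoj⟩ := (Nat.dvd_prime_pow hp).mp (orderOf_dvd_of_pow_eq_one hA)
    rw [← hg, hoj] at hexp hdvd
    have hj1 : 1 ≤ j := by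
      rcases Nat.eq_zero_or_pos j with rfl | h
      · rw [pow_zero] at hexp; omega
      · exact h
    have hpdvd : p ∣ 12 := dvd_trans (dvd_pow_self p (by omega)) hdvd
    have hple : p ≤ 12 := Nat.le_of_dvd (by norm_num) hpdvd
    have hp2le := hp.two_le
    have : p = 2 ∨ p = 3 := by
      interval_cases p <;> revert hpdvd hp <;> decide
    rcases this with rfl | rfl
    · have hj3 : 3 ≤ j := by
        by_contra hcon2
        push_neg at hcon2
        interval_cases j <;> omega
      have h8 : (8 : ℕ) ∣ 2 ^ j := by
        have : (8 : ℕ) = 2 ^ 3 := by norm_num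
        rw [this]
        exact pow_dvd_pow 2 hj3
      have := h8.trans hdvd
      norm_num at this
    · have hj2 : 2 ≤ j := by
        by_contra hcon2
        push_neg at hcon2
        interval_cases j <;> omega
      have h9 : (9 : ℕ) ∣ 3 ^ j := by
        have : (9 : ℕ) = 3 ^ 2 := by norm_num
        rw [this]
        exact pow_dvd_pow 3 hj2
      have := h9.trans hdvd
      norm_num at this
  -- build the quotient
  set f : G →* Multiplicative (ZMod (n i₀)) :=
    (Pi.evalMonoidHom (fun i => Multiplicative (ZMod (n i))) i₀).comp eqv.toMonoidHom with hf
  have hsurj : Function.Surjective f := by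
    intro y
    refine ⟨eqv.symm (Pi.mulSingle i₀ y), ?_⟩
    show (eqv (eqv.symm (Pi.mulSingle i₀ y))) i₀ = y
    rw [MulEquiv.apply_symm_apply]
    simp
  refine ⟨f.ker, ?_, ?_⟩
  · have e2 := QuotientGroup.quotientKerEquivOfSurjective f hsurj
    exact isCyclic_of_surjective e2.symm e2.symm.surjective
  · have e2 := QuotientGroup.quotientKerEquivOfSurjective f hsurj
    rw [Nat.card_congr e2.toEquiv]
    have : Nat.card (Multiplicative (ZMod (n i₀))) = n i₀ := Nat.card_zmod (n i₀)
    omega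

end Quot

/-- Let `p` be a prime and `G` a finite abelian `p`-group.  Then the unit
group `𝒰(ℤ[G])` of the integral group ring has nonzero rank -- equivalently, it is
infinite -- if and only if `G` has a cyclic quotient of order at least `5`, equivalently if
and only if the exponent of `G` is at least `5`. -/
theorem units_of_integral_group_ring_of_abelian_pGroup_infinite_iff
    (p : ℕ) (hp : p.Prime) (G : Type*) [CommGroup G] [Fintype G]
    (hpG : IsPGroup p G) :
    (Infinite (MonoidAlgebra ℤ G)ˣ ↔
      ∃ K : Subgroup G, IsCyclic (G ⧸ K) ∧ 5 ≤ Nat.card (G ⧸ K)) ∧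
    (Infinite (MonoidAlgebra ℤ G)ˣ ↔ 5 ≤ Monoid.exponent G) := by
  have hexp_iff : Infinite (MonoidAlgebra ℤ G)ˣ ↔ 5 ≤ Monoid.exponent G := by
    constructor
    · intro hinf
      by_contra hcon
      push_neg at hcon
      have hfin := finite_units_small hp hpG (by omega)
      exact not_finite (MonoidAlgebra ℤ G)ˣ
    · intro hge
      exact infinite_units_of_exponent hp hpG hge
  refine ⟨?_, hexp_iff⟩
  rw [hexp_iff]
  constructor
  · intro hge
    exact quot_of_exp_ge hp hpG hge
  · rintro ⟨K, hc, hcard⟩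
    exact exp_ge_of_quot K hc hcard
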